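/- Let Ω ⊆ ℝ^d be a non-empty open set with continuous boundary and x₀ ∈ closure(Ω). Then there exist a bounded open neighbourhood V of x₀ and a sequence of bijective affine maps A_n(x) = B_n x + b_n on ℝ^d such that B_n → id, b_n → 0, and closure(A_n(Ω ∩ V)) ⊆ Ω for every n. -/

import Mathlib

open Filter Topology

/-- Let `Ω ⊆ ℝ^d` be a non-empty open set with continuous boundary
(every boundary point has, after a rigid motion, a local representation of `Ω` as the
open region above the graph of a continuous function) and let `x₀ ∈ closure Ω`. Then
there exist a bounded open neighbourhood `V` of `x₀` and bijective affine maps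
`Aₙ x = Bₙ x + bₙ` with `Bₙ → id`, `bₙ → 0` and `closure (Aₙ (Ω ∩ V)) ⊆ Ω` for all `n`. -/
theorem stmt18 (d : ℕ) (hd : 0 < d)
    (Ω : Set (EuclideanSpace ℝ (Fin d))) (hΩopen : IsOpen Ω) (hΩne : Ω.Nonempty)
    (hbd : ∀ y₀ ∈ frontier Ω, ∃ r > (0 : ℝ),
      ∃ M : EuclideanSpace ℝ (Fin d) ≃ᵢ EuclideanSpace ℝ (Fin d),
      ∃ F : EuclideanSpace ℝ (Fin (d - 1)) → ℝ, Continuous F ∧ M y₀ = 0 ∧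
        M '' (Ω ∩ Metric.ball y₀ r) =
          {x ∈ Metric.ball (0 : EuclideanSpace ℝ (Fin d)) r |
            F (WithLp.toLp 2 (fun i => x (Fin.castLE (Nat.sub_le d 1) i))) <
              x ⟨d - 1, Nat.sub_lt hd Nat.one_pos⟩})
    (x₀ : EuclideanSpace ℝ (Fin d)) (hx₀ : x₀ ∈ closure Ω) :
    ∃ V : Set (EuclideanSpace ℝ (Fin d)), IsOpen V ∧ Bornology.IsBounded V ∧ x₀ ∈ V ∧
      ∃ B : ℕ → EuclideanSpace ℝ (Fin d) →L[ℝ] EuclideanSpace ℝ (Fin d),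
      ∃ b : ℕ → EuclideanSpace ℝ (Fin d),
        (∀ n, Function.Bijective (B n)) ∧
        Tendsto B atTop (𝓝 (ContinuousLinearMap.id ℝ (EuclideanSpace ℝ (Fin d)))) ∧
        Tendsto b atTop (𝓝 0) ∧
        ∀ n, closure ((fun x => B n x + b n) '' (Ω ∩ V)) ⊆ Ω := by
  by_cases hx : x₀ ∈ Ω
  · -- interior case: small ball with closure inside Ω, identity maps
    obtain ⟨ε, εpos, hball⟩ :=
      Metric.nhds_basis_closedBall.mem_iff.mp (hΩopen.mem_nhds hx)
    refine ⟨Metric.ball x₀ ε, Metric.isOpen_ball, Metric.isBounded_ball,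
      Metric.mem_ball_self εpos, fun _ => ContinuousLinearMap.id ℝ _, fun _ => 0,
      fun _ => Function.bijective_id, tendsto_const_nhds, tendsto_const_nhds, ?_⟩
    intro n y hy
    have : (fun x : EuclideanSpace ℝ (Fin d) =>
        (ContinuousLinearMap.id ℝ (EuclideanSpace ℝ (Fin d))) x + 0) = id := by
      funext x; simp
    rw [this, Set.image_id] at hy
    have h1 : closure (Ω ∩ Metric.ball x₀ ε) ⊆ Metric.closedBall x₀ ε := by
      refine closure_minimal ?_ Metric.isClosed_closedBall
      exact (Set.inter_subset_right).trans Metric.ball_subset_closedBall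
    exact hball (h1 hy)
  · -- boundary case
    have hfront : x₀ ∈ frontier Ω := by
      rw [frontier, hΩopen.interior_eq]; exact ⟨hx₀, hx⟩
    obtain ⟨r, hr, M, F, hF, hM0, himg⟩ := hbd x₀ hfront
    set D : Fin d := ⟨d - 1, Nat.sub_lt hd Nat.one_pos⟩ with hD
    set e : EuclideanSpace ℝ (Fin d) := EuclideanSpace.single D 1 with he
    set ε : ℕ → ℝ := fun n => (r / 4) / (n + 1) with hε
    have hεpos : ∀ n, 0 < ε n := fun n => by positivity
    have hεle : ∀ n, ε n ≤ r / 4 := by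
      intro n
      have h1 : (1 : ℝ) ≤ (n : ℝ) + 1 := by
        have := Nat.cast_nonneg (α := ℝ) n; linarith
      exact div_le_self (by positivity) h1
    have hsymm0 : M.symm 0 = x₀ := by rw [← hM0]; exact M.symm_apply_apply x₀
    -- affinity of M
    have key : ∀ x v : EuclideanSpace ℝ (Fin d),
        M (x + (M.symm v - x₀)) = M x + v := by
      intro x v
      set A := M.toRealAffineIsometryEquiv with hA
      have hAc : ∀ z, A z = M z := fun z => by
        rw [hA, IsometryEquiv.coeFn_toRealAffineIsometryEquiv]
      have h1 : x + (M.symm v - x₀) = (M.symm v -ᵥ M.symm 0) +ᵥ x := by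
        rw [hsymm0, vsub_eq_sub, vadd_eq_add, add_comm]
      calc M (x + (M.symm v - x₀)) = A ((M.symm v -ᵥ M.symm 0) +ᵥ x) := by
            rw [h1, hAc]
        _ = A.linearIsometryEquiv (M.symm v -ᵥ M.symm 0) +ᵥ A x :=
            A.map_vadd _ _
        _ = (A (M.symm v) -ᵥ A (M.symm 0)) +ᵥ A x := by rw [A.map_vsub]
        _ = M x + v := by
            rw [hAc, hAc, hAc, M.apply_symm_apply, M.apply_symm_apply]
            simp [vsub_eq_sub, vadd_eq_add, add_comm]
    set b : ℕ → EuclideanSpace ℝ (Fin d) := fun n => M.symm (ε n • e) - x₀ with hb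
    have hεlim : Tendsto ε atTop (𝓝 0) := by
      have := tendsto_one_div_add_atTop_nhds_zero_nat.const_mul (r / 4)
      simpa [hε, div_eq_mul_inv, mul_comm] using this
    have hblim : Tendsto b atTop (𝓝 0) := by
      have h1 : Tendsto (fun n => ε n • e) atTop (𝓝 ((0 : ℝ) • e)) :=
        hεlim.smul_const e
      rw [zero_smul] at h1
      have h2 : Tendsto (fun n => M.symm (ε n • e)) atTop (𝓝 (M.symm 0)) :=
        (M.symm.continuous.tendsto _).comp h1
      rw [hsymm0] at h2
      have := h2.sub_const x₀
      simpa [hb] using this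
    refine ⟨Metric.ball x₀ (r / 4), Metric.isOpen_ball, Metric.isBounded_ball,
      Metric.mem_ball_self (by linarith), fun _ => ContinuousLinearMap.id ℝ _, b,
      fun _ => Function.bijective_id, tendsto_const_nhds, hblim, ?_⟩
    intro n y hy
    -- the map is translation by b n
    have hmap : (fun x : EuclideanSpace ℝ (Fin d) =>
        (ContinuousLinearMap.id ℝ (EuclideanSpace ℝ (Fin d))) x + b n) =
        fun x => x + b n := by funext x; simp
    rw [hmap] at hy
    -- closure of translated image
    have hcl : closure ((fun x => x + b n) '' (Ω ∩ Metric.ball x₀ (r / 4))) =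
        (fun x => x + b n) '' closure (Ω ∩ Metric.ball x₀ (r / 4)) :=
      ((Homeomorph.addRight (b n)).image_closure _).symm
    rw [hcl] at hy
    obtain ⟨z, hz, rfl⟩ := hy
    -- properties of M z
    have hGsub : M '' (Ω ∩ Metric.ball x₀ (r / 4)) ⊆
        {x | F (WithLp.toLp 2 (fun i => x (Fin.castLE (Nat.sub_le d 1) i))) ≤ x D} ∩
          Metric.closedBall 0 (r / 4) := by
      rintro _ ⟨w, ⟨hwΩ, hwb⟩, rfl⟩
      have hw' : M w ∈ M '' (Ω ∩ Metric.ball x₀ r) :=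
        ⟨w, ⟨hwΩ, Metric.ball_subset_ball (by linarith) hwb⟩, rfl⟩
      rw [himg] at hw'
      refine ⟨le_of_lt hw'.2, ?_⟩
      rw [Metric.mem_closedBall, ← hM0, M.dist_eq]
      exact le_of_lt hwb
    have hGclosed : IsClosed ({x : EuclideanSpace ℝ (Fin d) |
        F (WithLp.toLp 2 (fun i => x (Fin.castLE (Nat.sub_le d 1) i))) ≤ x D} ∩
          Metric.closedBall 0 (r / 4)) := by
      refine IsClosed.inter ?_ Metric.isClosed_closedBall
      have hc1 : Continuous fun x : EuclideanSpace ℝ (Fin d) =>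
          F (WithLp.toLp 2 (fun i => x (Fin.castLE (Nat.sub_le d 1) i))) := by
        refine hF.comp ?_
        exact (PiLp.continuous_toLp 2 _).comp
          (continuous_pi fun i => (continuous_apply _).comp (PiLp.continuous_ofLp 2 _))
      exact isClosed_le hc1 ((continuous_apply D).comp (PiLp.continuous_ofLp 2 _))
    have hzG : M z ∈ {x : EuclideanSpace ℝ (Fin d) |
        F (WithLp.toLp 2 (fun i => x (Fin.castLE (Nat.sub_le d 1) i))) ≤ x D} ∩
          Metric.closedBall 0 (r / 4) := by
      have h1 : M z ∈ closure (M '' (Ω ∩ Metric.ball x₀ (r / 4))) :=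
        image_closure_subset_closure_image M.continuous (Set.mem_image_of_mem M hz)
      exact closure_minimal hGsub hGclosed h1
    -- the shifted point is in the graph region
    have hcoord : ∀ i : Fin (d - 1),
        (M z + ε n • e) (Fin.castLE (Nat.sub_le d 1) i) =
          M z (Fin.castLE (Nat.sub_le d 1) i) := by
      intro i
      have hne : Fin.castLE (Nat.sub_le d 1) i ≠ D := by
        intro h
        have := congrArg Fin.val h
        simp [hD] at this
        exact absurd this (Nat.ne_of_lt i.isLt)
      simp [he, EuclideanSpace.single_apply, hne]
    have hDcoord : (M z + ε n • e) D = M z D + ε n := by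
      simp [he, EuclideanSpace.single_apply]
    have hmem : M z + ε n • e ∈ M '' (Ω ∩ Metric.ball x₀ r) := by
      rw [himg]
      constructor
      · rw [mem_ball_zero_iff]
        calc ‖M z + ε n • e‖ ≤ ‖M z‖ + ‖ε n • e‖ := norm_add_le _ _
          _ ≤ r / 4 + ε n := by
              have h1 : ‖M z‖ ≤ r / 4 := by
                have := hzG.2; rwa [Metric.mem_closedBall, dist_zero_right] at this
              have h2 : ‖ε n • e‖ = ε n := by
                rw [norm_smul, he, EuclideanSpace.norm_single]
                simp [abs_of_pos (hεpos n)]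
              linarith
          _ < r := by linarith [hεle n]
      · show F _ < _
        have h1 : (fun i => (M z + ε n • e) (Fin.castLE (Nat.sub_le d 1) i)) =
            fun i => M z (Fin.castLE (Nat.sub_le d 1) i) := funext hcoord
        rw [h1, hDcoord]
        have := hzG.1
        calc F (WithLp.toLp 2 (fun i => M z (Fin.castLE (Nat.sub_le d 1) i))) ≤ M z D := this
          _ < M z D + ε n := by linarith [hεpos n]
    obtain ⟨w, hwmem, hw⟩ := hmem
    have : M (z + b n) = M w := by rw [hb, key z (ε n • e), hw]
    have hzw : z + b n = w := M.injective this
    show z + b n ∈ Ω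
    rw [hzw]
    exact hwmem.1
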